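/- Define T_r(w) = w * exp(w^2/2) * ∫_w^∞ t^r * exp(-t^2/2) dt. If 0 ≤ r ≤ 1, then for all w > 0, T_r(w) ≤ w^r. -/

import Mathlib

open Real MeasureTheory Set Filter

lemma aux_deriv (x : ℝ) :
    HasDerivAt (fun t : ℝ => -Real.exp (-t ^ 2 / 2))
      (x * Real.exp (-x ^ 2 / 2)) x := by
  have h1 : HasDerivAt (fun t : ℝ => -t ^ 2 / 2) (-x) x := by
    have := ((hasDerivAt_pow 2 x).neg.div_const 2)
    refine this.congr_deriv ?_
    simp; ring
  have h2 := h1.exp.neg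
  refine h2.congr_deriv ?_
  ring

lemma aux_tendsto : Tendsto (fun t : ℝ => -Real.exp (-t ^ 2 / 2)) atTop (nhds 0) := by
  have h : Tendsto (fun t : ℝ => -t ^ 2 / 2) atTop atBot := by
    apply Tendsto.atBot_div_const (by norm_num)
    exact tendsto_neg_atTop_atBot.comp (tendsto_pow_atTop two_ne_zero)
  simpa using (Real.tendsto_exp_atBot.comp h).neg

lemma aux_int (w : ℝ) (hw : 0 < w) :
    (∫ t in Set.Ioi w, t * Real.exp (-t ^ 2 / 2)) = Real.exp (-w ^ 2 / 2) := by
  have := integral_Ioi_of_hasDerivAt_of_nonneg' (g := fun t : ℝ => -Real.exp (-t ^ 2 / 2))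
    (g' := fun t : ℝ => t * Real.exp (-t ^ 2 / 2)) (a := w) (l := 0)
    (fun x _ => aux_deriv x)
    (fun x hx => mul_nonneg (hw.trans hx).le (Real.exp_pos _).le) aux_tendsto
  simpa using this

lemma aux_integrable (w : ℝ) (hw : 0 < w) :
    IntegrableOn (fun t : ℝ => t * Real.exp (-t ^ 2 / 2)) (Set.Ioi w) := by
  exact integrableOn_Ioi_deriv_of_nonneg' (fun x _ => aux_deriv x)
    (fun x hx => mul_nonneg (hw.trans hx).le (Real.exp_pos _).le) aux_tendsto

theorem stmt_5 (r : ℝ) (hr0 : 0 ≤ r) (hr1 : r ≤ 1) (w : ℝ) (hw : 0 < w) :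
    w * Real.exp (w ^ 2 / 2) * ∫ t in Set.Ioi w, t ^ r * Real.exp (-t ^ 2 / 2)
      ≤ w ^ r := by
  -- pointwise bound on Ioi w
  have hbound : ∀ t ∈ Set.Ioi w, t ^ r * Real.exp (-t ^ 2 / 2)
      ≤ w ^ (r - 1) * (t * Real.exp (-t ^ 2 / 2)) := by
    intro t ht
    have htpos : 0 < t := hw.trans ht
    have h1 : t ^ r = t ^ (r - 1) * t := by
      rw [← Real.rpow_add_one htpos.ne']; ring_nf
    have h2 : t ^ (r - 1) ≤ w ^ (r - 1) :=
      Real.rpow_le_rpow_of_nonpos hw (le_of_lt ht) (by linarith)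
    calc t ^ r * Real.exp (-t ^ 2 / 2) = t ^ (r - 1) * (t * Real.exp (-t ^ 2 / 2)) := by
          rw [h1]; ring
      _ ≤ w ^ (r - 1) * (t * Real.exp (-t ^ 2 / 2)) := by
          apply mul_le_mul_of_nonneg_right h2
          exact mul_nonneg htpos.le (Real.exp_pos _).le
  have hgint : IntegrableOn (fun t : ℝ => w ^ (r - 1) * (t * Real.exp (-t ^ 2 / 2)))
      (Set.Ioi w) := (aux_integrable w hw).const_mul _
  have hfint : IntegrableOn (fun t : ℝ => t ^ r * Real.exp (-t ^ 2 / 2)) (Set.Ioi w) := by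
    apply Integrable.mono' hgint
    · have hc : ContinuousOn (fun t : ℝ => t ^ r * Real.exp (-t ^ 2 / 2)) (Set.Ioi w) := by
        apply ContinuousOn.mul
        · exact continuousOn_id.rpow_const (fun x hx => Or.inr hr0)
        · exact (Real.continuous_exp.comp (by continuity)).continuousOn
      exact hc.aestronglyMeasurable measurableSet_Ioi
    · filter_upwards [ae_restrict_mem measurableSet_Ioi] with t ht
      have htpos : 0 < t := hw.trans ht
      rw [Real.norm_eq_abs, abs_of_nonneg
        (mul_nonneg (Real.rpow_nonneg htpos.le r) (Real.exp_pos _).le)]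
      exact hbound t ht
  have hmono : (∫ t in Set.Ioi w, t ^ r * Real.exp (-t ^ 2 / 2))
      ≤ ∫ t in Set.Ioi w, w ^ (r - 1) * (t * Real.exp (-t ^ 2 / 2)) :=
    setIntegral_mono_on hfint hgint measurableSet_Ioi hbound
  have hval : (∫ t in Set.Ioi w, w ^ (r - 1) * (t * Real.exp (-t ^ 2 / 2)))
      = w ^ (r - 1) * Real.exp (-w ^ 2 / 2) := by
    rw [integral_const_mul, aux_int w hw]
  have key : (∫ t in Set.Ioi w, t ^ r * Real.exp (-t ^ 2 / 2))
      ≤ w ^ (r - 1) * Real.exp (-w ^ 2 / 2) := hval ▸ hmono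
  have hpos : 0 < w * Real.exp (w ^ 2 / 2) := mul_pos hw (Real.exp_pos _)
  calc w * Real.exp (w ^ 2 / 2) * ∫ t in Set.Ioi w, t ^ r * Real.exp (-t ^ 2 / 2)
      ≤ w * Real.exp (w ^ 2 / 2) * (w ^ (r - 1) * Real.exp (-w ^ 2 / 2)) :=
        mul_le_mul_of_nonneg_left key hpos.le
    _ = w ^ r := by
        have he : Real.exp (w ^ 2 / 2) * Real.exp (-w ^ 2 / 2) = 1 := by
          rw [← Real.exp_add, show w ^ 2 / 2 + -w ^ 2 / 2 = 0 from by ring, Real.exp_zero]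
        have h3 : w ^ (r - 1) * w = w ^ r := by
          rw [← Real.rpow_add_one hw.ne']; ring_nf
        rw [show w * Real.exp (w ^ 2 / 2) * (w ^ (r - 1) * Real.exp (-w ^ 2 / 2))
          = (w ^ (r - 1) * w) * (Real.exp (w ^ 2 / 2) * Real.exp (-w ^ 2 / 2)) from by ring,
          he, h3, mul_one]
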